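/- Let (ξ_n)_{n≥0} be i.i.d. standard normal random variables and β > 0. If s ≥ 1 and s < β e^{γ/2}, then (s√2/β)^n |ξ_0 ξ_1 ⋯ ξ_{n-1}| → 0 almost surely as n → ∞. -/

import Mathlib

open MeasureTheory ProbabilityTheory Filter Set Real
open scoped NNReal ENNReal
local notation "γ" => Real.eulerMascheroniConstant


lemma L1 : ∫ t in Ioi (0:ℝ), t ^ (-1/2 : ℝ) * (Real.log t * Real.exp (-t))
    = -Real.sqrt π * (γ + 2 * Real.log 2) := by
  have h1 := Complex.hasDerivAt_GammaIntegral (s := 1/2) (by norm_num)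
  have h2 : Complex.GammaIntegral =ᶠ[nhds (1/2 : ℂ)] Complex.Gamma := by
    filter_upwards [IsOpen.mem_nhds (isOpen_lt continuous_const Complex.continuous_re)
      (by norm_num : (0:ℝ) < (1/2 : ℂ).re)] with z hz
    exact (Complex.Gamma_eq_integral hz).symm
  have h3 : HasDerivAt Complex.Gamma
      (∫ t : ℝ in Ioi 0, (t:ℂ) ^ ((1/2:ℂ) - 1) * (Real.log t * Real.exp (-t))) (1/2 : ℂ) :=
    h1.congr_of_eventuallyEq h2.symm
  have h12 : ((1/2:ℝ):ℂ) = (1/2:ℂ) := by norm_num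
  rw [← h12] at h3
  have h4 := h3.comp_ofReal
  have h5 : HasDerivAt (fun x : ℝ => Complex.Gamma x)
      ((-Real.sqrt π * (γ + 2 * Real.log 2) : ℝ) : ℂ) (1/2 : ℝ) := by
    have := Real.hasDerivAt_Gamma_one_half.ofReal_comp
    simpa only [← Complex.Gamma_ofReal] using this
  have h6 := h4.unique h5
  have h7 : (∫ t : ℝ in Ioi 0, (t:ℂ) ^ (((1/2:ℝ):ℂ) - 1) * (Real.log t * Real.exp (-t)))
      = ((∫ t : ℝ in Ioi 0, t ^ (-1/2 : ℝ) * (Real.log t * Real.exp (-t)) : ℝ) : ℂ) := by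
    have : ∀ r : ℝ, (r:ℂ) = @RCLike.ofReal ℂ _ r := fun r => rfl
    conv_rhs => rw [this, ← integral_ofReal]
    refine setIntegral_congr_fun measurableSet_Ioi fun t ht => ?_
    rw [← this]
    push_cast
    rw [Complex.ofReal_cpow (le_of_lt ht)]
    norm_num
  rw [h7] at h6
  exact_mod_cast h6


lemma Lint {b : ℝ} (hb : 0 < b) :
    IntegrableOn (fun x => Real.log x * Real.exp (-b*x^2)) (Ioi (0:ℝ)) := by
  have hmeas : AEStronglyMeasurable (fun x => Real.log x * Real.exp (-b*x^2)) volume :=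
    (Real.measurable_log.mul (by fun_prop)).aestronglyMeasurable
  have h1 : IntegrableOn (fun x => Real.log x * Real.exp (-b*x^2)) (Ioc 0 1) := by
    refine Integrable.mono' (g := fun x => 2 * x ^ (-1/2 : ℝ)) ?_ hmeas.restrict ?_
    · exact (((intervalIntegral.intervalIntegrable_rpow' (by norm_num : (-1:ℝ) < -1/2)).1).const_mul 2)
    · rw [ae_restrict_iff' measurableSet_Ioc]
      filter_upwards with x hx
      obtain ⟨hx0, hx1⟩ := hx
      have hexp : Real.exp (-b*x^2) ≤ 1 := by
        rw [Real.exp_le_one_iff]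
        nlinarith
      have hlog : |Real.log x| ≤ 2 * x ^ (-1/2 : ℝ) := by
        rw [abs_of_nonpos (Real.log_nonpos hx0.le hx1), ← Real.log_inv]
        calc Real.log x⁻¹ ≤ (x⁻¹) ^ (1/2 : ℝ) / (1/2) :=
              Real.log_le_rpow_div (by positivity) (by norm_num)
          _ = 2 * x ^ (-1/2 : ℝ) := by
              rw [← Real.rpow_neg_one x, ← Real.rpow_mul hx0.le]
              norm_num
              ring
      calc ‖Real.log x * Real.exp (-b*x^2)‖ = |Real.log x| * Real.exp (-b*x^2) := by
            rw [norm_mul, Real.norm_eq_abs, Real.norm_eq_abs, abs_of_pos (Real.exp_pos _)]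
        _ ≤ |Real.log x| * 1 := by
            exact mul_le_mul_of_nonneg_left hexp (abs_nonneg _)
        _ ≤ 2 * x ^ (-1/2 : ℝ) := by rw [mul_one]; exact hlog
  have h2 : IntegrableOn (fun x => Real.log x * Real.exp (-b*x^2)) (Ioi 1) := by
    refine Integrable.mono' (g := fun x => x ^ (1:ℝ) * Real.exp (-b*x^2)) ?_ hmeas.restrict ?_
    · exact (integrable_rpow_mul_exp_neg_mul_sq hb (by norm_num)).integrableOn
    · rw [ae_restrict_iff' measurableSet_Ioi]
      filter_upwards with x hx
      have hx1 : (1:ℝ) < x := hx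
      have hlog : |Real.log x| ≤ x := by
        rw [abs_of_nonneg (Real.log_nonneg hx1.le)]
        linarith [Real.log_le_sub_one_of_pos (by linarith : (0:ℝ) < x)]
      calc ‖Real.log x * Real.exp (-b*x^2)‖ = |Real.log x| * Real.exp (-b*x^2) := by
            rw [norm_mul, Real.norm_eq_abs, Real.norm_eq_abs, abs_of_pos (Real.exp_pos _)]
        _ ≤ x * Real.exp (-b*x^2) :=
            mul_le_mul_of_nonneg_right hlog (Real.exp_pos _).le
        _ = x ^ (1:ℝ) * Real.exp (-b*x^2) := by rw [Real.rpow_one]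
  rw [← Ioc_union_Ioi_eq_Ioi (zero_le_one : (0:ℝ) ≤ 1)]
  exact h1.union h2

lemma L2 : ∫ x in Ioi (0:ℝ), Real.log x * Real.exp (-x^2)
    = -Real.sqrt π * (γ + 2 * Real.log 2) / 4 := by
  have key := integral_comp_rpow_Ioi_of_pos
    (g := fun t : ℝ => t ^ (-1/2 : ℝ) * (Real.log t * Real.exp (-t))) (p := 2) two_pos
  rw [L1] at key
  have congr1 : ∫ x in Ioi (0:ℝ),
      (2 * x ^ ((2:ℝ) - 1)) • ((x ^ (2:ℝ)) ^ (-1/2 : ℝ) *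
        (Real.log (x ^ (2:ℝ)) * Real.exp (-(x ^ (2:ℝ)))))
      = ∫ x in Ioi (0:ℝ), 4 * (Real.log x * Real.exp (-x^2)) := by
    refine setIntegral_congr_fun measurableSet_Ioi fun x hx => ?_
    have hx0 : (0:ℝ) < x := hx
    have e1 : x ^ (2:ℝ) = x ^ 2 := by
      rw [show (2:ℝ) = ((2:ℕ):ℝ) by norm_num, Real.rpow_natCast]
    have e2 : (x ^ (2:ℝ)) ^ (-1/2 : ℝ) = x⁻¹ := by
      rw [← Real.rpow_mul hx0.le]
      norm_num [Real.rpow_neg_one]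
    have e3 : Real.log (x ^ (2:ℝ)) = 2 * Real.log x := Real.log_rpow hx0 2
    have e4 : x ^ ((2:ℝ) - 1) = x := by norm_num
    rw [smul_eq_mul, e2, e3, e4, e1]
    field_simp
    ring
  rw [congr1, integral_const_mul] at key
  linarith

lemma L3 : ∫ x in Ioi (0:ℝ), Real.log x * Real.exp (-x^2/2)
    = Real.sqrt 2 * (Real.log (Real.sqrt 2) * (Real.sqrt π / 2)
        + -Real.sqrt π * (γ + 2 * Real.log 2) / 4) := by
  have hs2 : (0:ℝ) < Real.sqrt 2 := Real.sqrt_pos.mpr two_pos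
  have key := integral_comp_mul_left_Ioi
    (g := fun x => Real.log x * Real.exp (-x^2/2)) 0 hs2
  rw [mul_zero] at key
  have congr1 : ∫ x in Ioi (0:ℝ),
      Real.log (Real.sqrt 2 * x) * Real.exp (-(Real.sqrt 2 * x)^2/2)
      = ∫ x in Ioi (0:ℝ), (Real.log (Real.sqrt 2) * Real.exp (-x^2)
          + Real.log x * Real.exp (-x^2)) := by
    refine setIntegral_congr_fun measurableSet_Ioi fun x hx => ?_
    have hx0 : (0:ℝ) < x := hx
    have e1 : -(Real.sqrt 2 * x)^2 / 2 = -x^2 := by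
      rw [mul_pow, Real.sq_sqrt (by norm_num : (0:ℝ) ≤ 2)]
      ring
    rw [e1, Real.log_mul hs2.ne' hx0.ne']
    ring
  have hi1 : IntegrableOn (fun x => Real.log (Real.sqrt 2) * Real.exp (-x^2)) (Ioi (0:ℝ)) := by
    have : Integrable (fun x : ℝ => Real.exp (-1*x^2)) := integrable_exp_neg_mul_sq one_pos
    simp only [neg_mul, one_mul] at this
    exact (this.integrableOn).const_mul _
  have hi2 : IntegrableOn (fun x => Real.log x * Real.exp (-x^2)) (Ioi (0:ℝ)) := by
    have := Lint one_pos
    simpa using this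
  rw [congr1, integral_add hi1 hi2, integral_const_mul, L2] at key
  have hgauss : ∫ x in Ioi (0:ℝ), Real.exp (-x^2) = Real.sqrt π / 2 := by
    have := integral_gaussian_Ioi 1
    simpa using this
  rw [hgauss] at key
  simp only [smul_eq_mul] at key
  rw [key, ← mul_assoc, mul_inv_cancel₀ hs2.ne', one_mul]


lemma L4 : Integrable (fun x => Real.log |x| * Real.exp (-x^2/2)) := by
  have hmeas : AEStronglyMeasurable (fun x => Real.log |x| * Real.exp (-x^2/2)) volume :=
    ((Real.measurable_log.comp measurable_abs).mul (by fun_prop)).aestronglyMeasurable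
  have hIoi : IntegrableOn (fun x => Real.log |x| * Real.exp (-x^2/2)) (Ioi (0:ℝ)) := by
    have := Lint (b := 1/2) (by norm_num)
    refine (this.congr_fun (fun x hx => ?_) measurableSet_Ioi).congr_set_ae (by rfl)
    rw [abs_of_pos hx]
    ring_nf
  have hIio : IntegrableOn (fun x => Real.log |x| * Real.exp (-x^2/2)) (Iio (0:ℝ)) := by
    rw [← (Measure.measurePreserving_neg (volume : Measure ℝ)).integrableOn_comp_preimage
        (Homeomorph.neg ℝ).measurableEmbedding]
    simp only [Function.comp_def, neg_preimage, neg_Iio, neg_neg, neg_zero, abs_neg, neg_sq]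
    exact hIoi
  rw [← integrableOn_univ, ← @Iio_union_Ici _ _ (0 : ℝ), integrableOn_union,
    integrableOn_Ici_iff_integrableOn_Ioi]
  exact ⟨hIio, hIoi⟩

lemma L5 : ∫ x : ℝ, Real.log |x| * Real.exp (-x^2/2)
    = 2 * ∫ x in Ioi (0:ℝ), Real.log x * Real.exp (-x^2/2) := by
  have hIoi := L4.integrableOn (s := Ioi (0:ℝ))
  have hIio := L4.integrableOn (s := Iio (0:ℝ))
  have h1 : ∫ x : ℝ, Real.log |x| * Real.exp (-x^2/2)
      = (∫ x in Iic (0:ℝ), Real.log |x| * Real.exp (-x^2/2))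
        + ∫ x in Ioi (0:ℝ), Real.log |x| * Real.exp (-x^2/2) :=
    (intervalIntegral.integral_Iic_add_Ioi (L4.integrableOn) hIoi).symm
  have h2 : ∫ x in Iic (0:ℝ), Real.log |x| * Real.exp (-x^2/2)
      = ∫ x in Ioi (0:ℝ), Real.log |x| * Real.exp (-x^2/2) := by
    have e : ∫ x in Iic (0:ℝ), Real.log |x| * Real.exp (-x^2/2)
        = ∫ x in Iic (0:ℝ), Real.log |(-x)| * Real.exp (-(-x)^2/2) :=
      setIntegral_congr_fun measurableSet_Iic fun x _ => by rw [abs_neg, neg_sq]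
    have h := integral_comp_neg_Iic (0:ℝ) (fun x => Real.log |x| * Real.exp (-x^2/2))
    rw [neg_zero] at h
    rw [e]
    exact h
  have h3 : ∀ S : Set ℝ, S ⊆ Ioi 0 → MeasurableSet S → ∫ x in S, Real.log |x| * Real.exp (-x^2/2)
      = ∫ x in S, Real.log x * Real.exp (-x^2/2) := by
    intro S hS hSm
    refine setIntegral_congr_fun hSm fun x hx => ?_
    rw [abs_of_pos (hS hx)]
  rw [h1, h2, h3 _ (by rfl) measurableSet_Ioi]
  ring

lemma L6val : Real.sqrt (2*π) * (-(γ + Real.log 2)/2)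
    = 2 * (Real.sqrt 2 * (Real.log (Real.sqrt 2) * (Real.sqrt π / 2)
        + -Real.sqrt π * (γ + 2 * Real.log 2) / 4)) := by
  have h1 : Real.sqrt (2*π) = Real.sqrt 2 * Real.sqrt π :=
    Real.sqrt_mul (by norm_num) _
  have h2 : Real.log (Real.sqrt 2) = Real.log 2 / 2 := Real.log_sqrt (by norm_num)
  rw [h1, h2]
  ring

lemma L7 : Integrable (fun x => Real.log |x|) (gaussianReal 0 1) ∧
    ∫ x, Real.log |x| ∂(gaussianReal 0 1) = -(γ + Real.log 2)/2 := by
  have hv : (1 : ℝ≥0) ≠ 0 := one_ne_zero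
  set f : ℝ → ℝ≥0 := fun x => (gaussianPDFReal 0 1 x).toNNReal with hf
  have fmeas : Measurable f := (measurable_gaussianPDFReal 0 1).real_toNNReal
  have hdens : gaussianReal 0 1 = volume.withDensity (fun x => (f x : ℝ≥0∞)) := by
    rw [gaussianReal_of_var_ne_zero 0 hv]
    rfl
  have hpdf : ∀ x : ℝ, (f x : ℝ) = (Real.sqrt (2*π))⁻¹ * Real.exp (-x^2/2) := by
    intro x
    rw [hf, Real.coe_toNNReal _ (gaussianPDFReal_nonneg 0 1 x)]
    simp only [gaussianPDFReal]
    norm_num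
  have hsmul : ∀ x : ℝ, f x • Real.log |x|
      = (Real.sqrt (2*π))⁻¹ * (Real.log |x| * Real.exp (-x^2/2)) := by
    intro x
    rw [NNReal.smul_def, smul_eq_mul, hpdf x]
    ring
  constructor
  · rw [hdens, integrable_withDensity_iff_integrable_smul fmeas]
    refine (Integrable.const_mul L4 ((Real.sqrt (2*π))⁻¹)).congr
      (Filter.Eventually.of_forall fun x => ?_)
    exact (hsmul x).symm
  · rw [hdens, integral_withDensity_eq_integral_smul fmeas,
      integral_congr_ae (Filter.Eventually.of_forall hsmul), integral_const_mul, L5, L3]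
    rw [← L6val]
    rw [← mul_assoc, inv_mul_cancel₀ (by positivity : Real.sqrt (2*π) ≠ 0), one_mul]

/-- If `(ξ_n)` are i.i.d. standard normal, `β > 0`, `1 ≤ s` and `s < β e^{γ/2}`, then
`(s√2/β)^n |ξ_0 ⋯ ξ_{n-1}| → 0` almost surely. -/
theorem gaussian_product_tendsto_zero
    {Ω : Type*} [MeasureSpace Ω] [IsProbabilityMeasure (ℙ : Measure Ω)]
    (β s : ℝ) (hβ : 0 < β)
    (ξ : ℕ → Ω → ℝ) (hmeas : ∀ n, Measurable (ξ n))
    (hindep : iIndepFun ξ ℙ)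
    (hgauss : ∀ n, Measure.map (ξ n) ℙ = gaussianReal 0 1)
    (hs1 : 1 ≤ s) (hs2 : s < β * Real.exp (Real.eulerMascheroniConstant / 2)) :
    ∀ᵐ ω ∂ℙ, Tendsto
      (fun n => (s * Real.sqrt 2 / β) ^ n * |∏ i ∈ Finset.range n, ξ i ω|)
      atTop (nhds 0) := by
  have hs0 : (0:ℝ) < s := lt_of_lt_of_le one_pos hs1
  set c : ℝ := s * Real.sqrt 2 / β with hc_def
  have hc : 0 < c := by positivity
  set E : ℝ := -(γ + Real.log 2)/2 with hE_def
  set g : ℝ → ℝ := fun x => Real.log |x| with hg_def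
  have mlog : Measurable g := Real.measurable_log.comp measurable_abs
  set X : ℕ → Ω → ℝ := fun i ω => g (ξ i ω) with hX_def
  have hident : ∀ i, IdentDistrib (X i) (X 0) ℙ ℙ := by
    intro i
    exact IdentDistrib.comp
      ⟨(hmeas i).aemeasurable, (hmeas 0).aemeasurable, by rw [hgauss i, hgauss 0]⟩ mlog
  have hpair : Pairwise (Function.onFun (IndepFun · · ℙ) X) :=
    fun i j hij => ((hindep.indepFun hij).comp mlog mlog)
  have hint0 : Integrable g (Measure.map (ξ 0) ℙ) := by rw [hgauss 0]; exact L7.1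
  have hint : Integrable (X 0) ℙ :=
    (integrable_map_measure mlog.aestronglyMeasurable (hmeas 0).aemeasurable).mp hint0
  have hmean : ∫ ω, X 0 ω ∂ℙ = E := by
    rw [hX_def]
    rw [show (∫ ω, g (ξ 0 ω) ∂ℙ) = ∫ x, g x ∂(Measure.map (ξ 0) ℙ) from
      (integral_map (hmeas 0).aemeasurable mlog.aestronglyMeasurable).symm]
    rw [hgauss 0]
    exact L7.2
  have hslln := strong_law_ae_real X hint hpair hident
  rw [hmean] at hslln
  have hzero : ∀ᵐ ω ∂ℙ, ∀ i, ξ i ω ≠ 0 := by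
    rw [ae_all_iff]
    intro i
    rw [ae_iff]
    have : {ω | ¬ ξ i ω ≠ 0} = ξ i ⁻¹' {0} := by ext ω; simp
    rw [this, ← Measure.map_apply (hmeas i) (measurableSet_singleton 0), hgauss i]
    exact gaussianReal_absolutelyContinuous 0 one_ne_zero (measure_singleton 0)
  -- key inequality
  have hL : Real.log c + E < 0 := by
    have h1 : Real.log s < Real.log β + γ/2 := by
      have := Real.log_lt_log hs0 hs2
      rwa [Real.log_mul hβ.ne' (Real.exp_pos _).ne', Real.log_exp] at this
    have h2 : Real.log c = Real.log s + Real.log (Real.sqrt 2) - Real.log β := by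
      rw [hc_def, Real.log_div (by positivity) hβ.ne', Real.log_mul hs0.ne'
        (by positivity : Real.sqrt 2 ≠ 0)]
    have h3 : Real.log (Real.sqrt 2) = Real.log 2 / 2 := Real.log_sqrt (by norm_num)
    rw [h2, h3, hE_def]
    linarith
  filter_upwards [hslln, hzero] with ω hA hne
  set S : ℕ → ℝ := fun n => n * Real.log c + ∑ i ∈ Finset.range n, Real.log |ξ i ω| with hS_def
  have hSbot : Tendsto S atTop atBot := by
    have havg : Tendsto (fun n : ℕ => Real.log c + (∑ i ∈ Finset.range n, X i ω)/n)
        atTop (nhds (Real.log c + E)) := tendsto_const_nhds.add hA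
    have hev : ∀ᶠ n : ℕ in atTop,
        Real.log c + (∑ i ∈ Finset.range n, X i ω)/n ≤ (Real.log c + E)/2 :=
      havg.eventually (eventually_le_nhds (by linarith))
    have hlin : Tendsto (fun n : ℕ => (n:ℝ) * ((Real.log c + E)/2)) atTop atBot :=
      (tendsto_natCast_atTop_atTop (R := ℝ)).atTop_mul_const_of_neg (by linarith)
    refine tendsto_atBot_mono' atTop ?_ hlin
    filter_upwards [hev, eventually_ge_atTop 1] with n h1 h2
    have hn : (n:ℝ) ≠ 0 := Nat.cast_ne_zero.mpr (by omega)
    have : S n = (n:ℝ) * (Real.log c + (∑ i ∈ Finset.range n, X i ω)/n) := by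
      rw [hS_def, mul_add, mul_comm ((n:ℝ)) ((∑ i ∈ Finset.range n, X i ω)/(n:ℝ)),
        div_mul_cancel₀ _ hn]
    rw [this]
    exact mul_le_mul_of_nonneg_left h1 (Nat.cast_nonneg n)
  have hexp : Tendsto (fun n => Real.exp (S n)) atTop (nhds 0) :=
    Real.tendsto_exp_atBot.comp hSbot
  refine hexp.congr fun n => ?_
  rw [Real.exp_add, Finset.abs_prod]
  congr 1
  · rw [Real.exp_nat_mul, Real.exp_log hc]
  · rw [Real.exp_sum]
    exact (Finset.prod_congr rfl fun i _ =>
      (Real.exp_log (abs_pos.mpr (hne i))).symm).symm
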